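/- For every integer a with 0 ≤ a < pq one has #{s ∈ ℕ : s ∉ S and s ≥ a} = #{(i,j) : 1 ≤ i ≤ p−1, 1 ≤ j ≤ q−1, and iq + jp ≥ pq + a}. (The right-hand side counts the spectral numbers i/p + j/q of the plane curve singularity x^p + y^q = 0 lying in the interval [1 + a/(pq), 2).) -/

import Mathlib

/-- The numerical semigroup generated by `p` and `q` (containing `0`). -/
def torusSemigroup (p q : ℕ) : Set ℕ := {s | ∃ a b : ℕ, s = a * p + b * q}

private lemma addback (a b c : ℕ) (h : b ≤ a) : (a - b) * c + b * c = a * c := by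
  rw [← Nat.add_mul, Nat.sub_add_cancel h]

/-- for `0 ≤ a < pq`, the number of gaps of `S` that are `≥ a` equals the number
of spectral numbers `i/p + j/q` (with `1 ≤ i ≤ p−1`, `1 ≤ j ≤ q−1`) lying in `[1 + a/(pq), 2)`,
i.e. the number of pairs `(i,j)` with `iq + jp ≥ pq + a`. -/
theorem gaps_eq_spectrum_count (p q : ℕ) (hp : 2 ≤ p) (hpq : p < q) (hcop : Nat.Coprime p q)
    (a : ℕ) (ha : a < p * q) :
    Set.ncard {s : ℕ | s ∉ torusSemigroup p q ∧ a ≤ s} =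
      Set.ncard {x : ℕ × ℕ | 1 ≤ x.1 ∧ x.1 ≤ p - 1 ∧ 1 ≤ x.2 ∧ x.2 ≤ q - 1 ∧
        p * q + a ≤ x.1 * q + x.2 * p} := by
  have hq2 : 2 < q := lt_of_le_of_lt hp hpq
  have hqp : q * p = p * q := Nat.mul_comm q p
  have hinj : Set.InjOn (fun x : ℕ × ℕ => x.1 * q + x.2 * p - p * q)
      {x : ℕ × ℕ | 1 ≤ x.1 ∧ x.1 ≤ p - 1 ∧ 1 ≤ x.2 ∧ x.2 ≤ q - 1 ∧
        p * q + a ≤ x.1 * q + x.2 * p} := by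
    rintro ⟨i, j⟩ hx ⟨i', j'⟩ hy hfeq
    obtain ⟨hi1, hi2, hj1, hj2, hge⟩ :
        1 ≤ i ∧ i ≤ p - 1 ∧ 1 ≤ j ∧ j ≤ q - 1 ∧ p * q + a ≤ i * q + j * p := hx
    obtain ⟨hi1', hi2', hj1', hj2', hge'⟩ :
        1 ≤ i' ∧ i' ≤ p - 1 ∧ 1 ≤ j' ∧ j' ≤ q - 1 ∧ p * q + a ≤ i' * q + j' * p := hy
    have h' : i * q + j * p - p * q = i' * q + j' * p - p * q := hfeq
    have h1 : i * q + j * p = i' * q + j' * p := by omega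
    have key : ∀ i j i' j' : ℕ, i ≤ i' → 1 ≤ i → i' ≤ p - 1 →
        i * q + j * p = i' * q + j' * p → i = i' := by
      intro i j i' j' hle hi1 hi2' h1
      have hiq : i * q ≤ i' * q := Nat.mul_le_mul hle (le_refl q)
      have hjple : j' * p ≤ j * p := by omega
      have hj'j : j' ≤ j := Nat.le_of_mul_le_mul_right hjple (by omega)
      have e1 : (i' - i) * q + i * q = i' * q := addback _ _ _ hle
      have e2 : (j - j') * p + j' * p = j * p := addback _ _ _ hj'j
      have hsub : (i' - i) * q = (j - j') * p := by omega
      have hdvd : p ∣ i' - i :=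
        hcop.dvd_of_dvd_mul_right ⟨j - j', hsub.trans (Nat.mul_comm _ _)⟩
      rcases Nat.eq_zero_or_pos (i' - i) with h0 | h0
      · omega
      · have := Nat.le_of_dvd h0 hdvd; omega
    have hii : i = i' := by
      rcases le_total i i' with hle | hle
      · exact key i j i' j' hle hi1 hi2' h1
      · exact (key i' j' i j hle hi1' hi2 h1.symm).symm
    have hjj : j = j' := by
      subst hii
      exact Nat.eq_of_mul_eq_mul_right (show 0 < p by omega) (show j * p = j' * p by omega)
    simp [hii, hjj]
  have key : {s : ℕ | s ∉ torusSemigroup p q ∧ a ≤ s} =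
      (fun x : ℕ × ℕ => x.1 * q + x.2 * p - p * q) ''
        {x : ℕ × ℕ | 1 ≤ x.1 ∧ x.1 ≤ p - 1 ∧ 1 ≤ x.2 ∧ x.2 ≤ q - 1 ∧
          p * q + a ≤ x.1 * q + x.2 * p} := by
    ext s
    simp only [Set.mem_setOf_eq, Set.mem_image]
    constructor
    · rintro ⟨hsS, has⟩
      obtain ⟨u, hu⟩ : ∃ u, q * u % p = 1 :=
        (Nat.exists_mul_mod_eq_one_of_coprime hcop.symm (by omega)).imp fun _ h => h.2
      obtain ⟨i, hi⟩ : ∃ i, i = s * u % p := ⟨_, rfl⟩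
      have hip : i < p := hi ▸ Nat.mod_lt _ (by omega)
      have hiq : i * q ≡ s [MOD p] := by
        rw [hi]
        calc (s * u) % p * q ≡ (s * u) * q [MOD p] := (Nat.mod_modEq (s * u) p).mul_right q
          _ = s * (q * u) := by ring
          _ ≡ s * (q * u % p) [MOD p] := (Nat.ModEq.mul_left s (Nat.mod_modEq (q * u) p)).symm
          _ = s := by rw [hu]; ring
      have epq : (p - 1) * q + q = p * q := by
        have := addback p 1 q (by omega); simpa using this
      have hiQle : i * q ≤ (p - 1) * q := Nat.mul_le_mul (by omega) (le_refl q)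
      have hle : i * q ≤ s + p * q := by omega
      have hmodeq : i * q ≡ s + p * q [MOD p] :=
        hiq.trans ((Nat.modEq_iff_dvd' (by omega)).2 ⟨q, by omega⟩)
      obtain ⟨k, hk⟩ := (Nat.modEq_iff_dvd' hle).1 hmodeq
      have hpk : p * k = k * p := Nat.mul_comm p k
      have hj : s + p * q = i * q + k * p := by omega
      have hi1 : 1 ≤ i := by
        by_contra h
        have hi0 : i = 0 := by omega
        rw [hi0] at hj
        apply hsS
        have hkple : q * p ≤ k * p := by omega
        have hkq : q ≤ k := Nat.le_of_mul_le_mul_right hkple (by omega)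
        have e2 : (k - q) * p + q * p = k * p := addback _ _ _ hkq
        exact ⟨k - q, 0, by omega⟩
      have hk2 : k ≤ q - 1 := by
        by_contra h
        have hkq : q ≤ k := by omega
        apply hsS
        have e2 : (k - q) * p + q * p = k * p := addback _ _ _ hkq
        exact ⟨k - q, i, by omega⟩
      have hk1 : 1 ≤ k := by
        by_contra h
        have hk0 : k = 0 := by omega
        rw [hk0] at hj
        omega
      refine ⟨⟨i, k⟩, ?_, ?_⟩
      · show 1 ≤ i ∧ i ≤ p - 1 ∧ 1 ≤ k ∧ k ≤ q - 1 ∧ p * q + a ≤ i * q + k * p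
        exact ⟨hi1, by omega, hk1, hk2, by omega⟩
      · show i * q + k * p - p * q = s
        omega
    · rintro ⟨⟨i, j⟩, hmem, hfx⟩
      obtain ⟨hi1, hi2, hj1, hj2, hge⟩ :
          1 ≤ i ∧ i ≤ p - 1 ∧ 1 ≤ j ∧ j ≤ q - 1 ∧ p * q + a ≤ i * q + j * p := hmem
      have hs : i * q + j * p - p * q = s := hfx
      constructor
      · rintro ⟨A, B, hAB⟩
        have hmain : i * q + j * p = p * q + (A * p + B * q) := by omega
        have eq1 : (q - 1) * p + p = q * p := by
          have := addback q 1 p (by omega); simpa using this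
        have hjple : j * p ≤ (q - 1) * p := Nat.mul_le_mul hj2 (le_refl p)
        have hBq : B * q < i * q := by omega
        have hBi : B < i := lt_of_mul_lt_mul_right hBq (Nat.zero_le q)
        have e3 : (i - B) * q + B * q = i * q := addback _ _ _ (le_of_lt hBi)
        have e5 : (q + A) * p = q * p + A * p := Nat.add_mul q A p
        have e4 : (q + A - j) * p + j * p = (q + A) * p := addback _ _ _ (by omega)
        have hsub : (i - B) * q = (q + A - j) * p := by omega
        have hdvd : p ∣ i - B :=
          hcop.dvd_of_dvd_mul_right ⟨q + A - j, hsub.trans (Nat.mul_comm _ _)⟩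
        have := Nat.le_of_dvd (by omega) hdvd
        omega
      · omega
  rw [key, Set.ncard_image_of_injOn hinj]
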